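/- Suppose λ < cf(κ) are uncountable cardinals and X is a Banach space of density κ such that X = ⋃_{ξ<λ} X_ξ where each X_ξ is a proper closed linear subspace of X. Then X does not admit an overcomplete set. -/
import Mathlib


open Cardinal Set

universe u

/-- The density character of a topological space: the least cardinality of a dense subset. -/
noncomputable def dens (X : Type u) [TopologicalSpace X] : Cardinal.{u} :=
  ⨅ s : {s : Set X // Dense s}, Cardinal.mk ↥(s.1)

/-- A set is linearly dense if its closed linear span is the whole space. -/
def LinearlyDense {X : Type u} [NormedAddCommGroup X] [NormedSpace ℝ X] (S : Set X) : Prop :=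
  (Submodule.span ℝ S).topologicalClosure = ⊤

/-- A set `Y` is overcomplete in `X` if `|Y| = dens X` and every subset of `Y` of full
cardinality is linearly dense in `X`. -/
def Overcomplete {X : Type u} [NormedAddCommGroup X] [NormedSpace ℝ X] (Y : Set X) : Prop :=
  Cardinal.mk ↥Y = dens X ∧ ∀ Z ⊆ Y, Cardinal.mk ↥Z = Cardinal.mk ↥Y → LinearlyDense Z

/-- if `X` has density `κ` and is the union of `λ < cf κ` proper closed
subspaces (`λ, κ` uncountable), then `X` admits no overcomplete set. -/
theorem stmt1 {X : Type u} [NormedAddCommGroup X] [NormedSpace ℝ X] [CompleteSpace X]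
    {κ lam : Cardinal.{u}} (hlam : Cardinal.aleph0 < lam) (hκ : Cardinal.aleph0 < κ)
    (hcf : lam < (κ.ord).cof) (hdens : dens X = κ)
    {ι : Type u} (hι : Cardinal.mk ι = lam) (Xs : ι → Submodule ℝ X)
    (hclosed : ∀ i, IsClosed (Xs i : Set X)) (hproper : ∀ i, Xs i ≠ ⊤)
    (hcover : ∀ x : X, ∃ i, x ∈ Xs i) :
    ¬ ∃ Y : Set X, Overcomplete Y := by
  rintro ⟨Y, hYcard, hYdense⟩
  rw [hdens] at hYcard
  -- Y is covered by the Y ∩ Xs i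
  have hYsub : Y ⊆ ⋃ i, (Y ∩ (Xs i : Set X)) := fun y hy => by
    obtain ⟨i, hi⟩ := hcover y
    exact mem_iUnion.mpr ⟨i, hy, hi⟩
  -- some piece has full cardinality
  have hex : ∃ i, Cardinal.mk ↥(Y ∩ (Xs i : Set X)) = κ := by
    by_contra h
    push_neg at h
    have hlt : ∀ i, Cardinal.mk ↥(Y ∩ (Xs i : Set X)) < κ := fun i =>
      lt_of_le_of_ne (hYcard ▸ Cardinal.mk_le_mk_of_subset (inter_subset_left)) (h i)
    have hsup : (⨆ i, Cardinal.mk ↥(Y ∩ (Xs i : Set X))) < κ :=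
      Ordinal.iSup_lt_lift (by rw [Cardinal.lift_id, hι]; exact hcf) hlt
    have hle : Cardinal.mk ↥(⋃ i, (Y ∩ (Xs i : Set X))) ≤
        Cardinal.mk ι * ⨆ i, Cardinal.mk ↥(Y ∩ (Xs i : Set X)) := Cardinal.mk_iUnion_le _
    have hltκ : Cardinal.mk ι * (⨆ i, Cardinal.mk ↥(Y ∩ (Xs i : Set X))) < κ :=
      Cardinal.mul_lt_of_lt hκ.le (hι ▸ hcf.trans_le (Ordinal.cof_ord_le κ)) hsup
    have : κ ≤ Cardinal.mk ↥(⋃ i, (Y ∩ (Xs i : Set X))) :=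
      hYcard ▸ Cardinal.mk_le_mk_of_subset hYsub
    exact absurd (this.trans (hle.trans_lt hltκ).le) (not_le.mpr (this.trans_lt (hle.trans_lt hltκ)))
  obtain ⟨i, hi⟩ := hex
  have hdense := hYdense (Y ∩ (Xs i : Set X)) inter_subset_left (by rw [hi, hYcard])
  have hspan : (Submodule.span ℝ (Y ∩ (Xs i : Set X))).topologicalClosure ≤ Xs i :=
    Submodule.topologicalClosure_minimal _
      (Submodule.span_le.mpr (fun x hx => hx.2)) (hclosed i)
  have htop : (Submodule.span ℝ (Y ∩ (Xs i : Set X))).topologicalClosure = ⊤ := hdense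
  exact hproper i (top_le_iff.mp (htop ▸ hspan))
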